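/- Let L be a complete lattice and X a set of elements of L not containing ⊤. If for some x ∈ L the variety V(x) is a reducible subset of (X, τ^cl) (nonempty and equal to a union of two closed sets, neither containing it), then there exist finitely many elements x₁, …, xₙ ∈ L such that V(x) = V(x₁) ∪ ⋯ ∪ V(xₙ) and V(xᵢ) is a proper subset of V(x) for every i. -/

import Mathlib

namespace ZariskiLattice

variable {L : Type*} [CompleteLattice L]

/-- The variety of `a` inside `X`: the points of `X` above `a`. -/
def V (X : Set L) (a : L) : Set X := {p : X | a ≤ (p : L)}

/-- The classical Zariski topology on `X`, generated by the subbase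
`{X \ V a | a ∈ L}`. -/
def tauCl (X : Set L) : TopologicalSpace X :=
  TopologicalSpace.generateFrom {s : Set X | ∃ a : L, s = (V X a)ᶜ}

/-- The finer patch topology on `X`, generated by the subbase
`{V a ∩ (X \ V b) | a, b ∈ L}`. -/
def tauFp (X : Set L) : TopologicalSpace X :=
  TopologicalSpace.generateFrom {s : Set X | ∃ a b : L, s = V X a ∩ (V X b)ᶜ}

/-- `I(A) = ⨅_{p ∈ A} p` for a subset `A ⊆ X`. -/
def lanI (X : Set L) (A : Set X) : L := ⨅ p ∈ A, (p : L)

/-- The radical `√a = I(V(a))` of an element `a`. -/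
def rad (X : Set L) (a : L) : L := lanI X (V X a)

/-- The set of radical elements `C(L) = {a | √a = a}`. -/
def CL (X : Set L) : Set L := {a : L | rad X a = a}

/-- `L` is `X`-top: the varieties are closed under finite unions. -/
def IsXTop (X : Set L) : Prop := ∀ a b : L, ∃ c : L, V X a ∪ V X b = V X c

/-- The set of maximal elements of `C(L) \ {⊤}`. -/
def MaxC (X : Set L) : Set L :=
  {q : L | q ∈ CL X ∧ q ≠ ⊤ ∧ ∀ r ∈ CL X, r ≠ ⊤ → q ≤ r → r = q}

/-- `C(L)` satisfies the complete max property. -/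
def CompleteMax (X : Set L) : Prop :=
  ∀ q ∈ MaxC X, ¬ (⨅ p ∈ MaxC X \ {q}, p) ≤ q

lemma V_antitone (X : Set L) {a b : L} (h : a ≤ b) : V X b ⊆ V X a :=
  fun _ hp => le_trans h hp

/-- If `F` is closed in `τ^cl` and `p ∉ F`, then `F` is covered by finitely many
varieties, none of which contains `p`. -/
lemma closed_avoid (X : Set L) {F : Set X} (hF : @IsClosed _ (tauCl X) F) {p : X}
    (hp : p ∉ F) :
    ∃ S : Finset L, F ⊆ ⋃ a ∈ S, V X a ∧ ∀ a ∈ S, p ∉ V X a := by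
  letI := tauCl X
  have hopen : @IsOpen _ (tauCl X) Fᶜ := hF.isOpen_compl
  have hB := @TopologicalSpace.isTopologicalBasis_of_subbasis X (tauCl X)
    {s : Set X | ∃ a : L, s = (V X a)ᶜ} rfl
  obtain ⟨v, hv, hpv, hvsub⟩ := hB.exists_subset_of_mem_open hp hopen
  obtain ⟨f, ⟨hfin, hfsub⟩, rfl⟩ := hv
  classical
  set h : Set X → L := fun u => if hu : ∃ a : L, u = (V X a)ᶜ then hu.choose else ⊥ with hh
  have hspec : ∀ u ∈ f, u = (V X (h u))ᶜ := by
    intro u hu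
    have : ∃ a : L, u = (V X a)ᶜ := hfsub hu
    simp only [hh, dif_pos this]
    exact this.choose_spec
  refine ⟨(hfin.image h).toFinset, ?_, ?_⟩
  · intro q hq
    by_contra hq'
    have : q ∈ ⋂₀ f := by
      intro u hu
      rw [hspec u hu]
      intro hqu
      apply hq'
      simp only [Set.Finite.mem_toFinset, Set.mem_image, Set.mem_iUnion]
      exact ⟨h u, ⟨u, hu, rfl⟩, hqu⟩
    exact (hvsub this) hq
  · intro a ha hpa
    simp only [Set.Finite.mem_toFinset, Set.mem_image] at ha
    obtain ⟨u, hu, rfl⟩ := ha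
    have := hpv u hu
    rw [hspec u hu] at this
    exact this hpa

/-- If `V(x)` is a reducible subset of `(X, τ^cl)`, then `V(x)` is a
finite union of varieties each of which is a proper subset of `V(x)`. -/
theorem variety_reducible_finite_union (X : Set L) (hX : (⊤ : L) ∉ X) (x : L)
    (hne : (V X x).Nonempty)
    (hred : ∃ F G : Set X, @IsClosed ↥X (tauCl X) F ∧ @IsClosed ↥X (tauCl X) G ∧
      V X x = F ∪ G ∧ ¬ V X x ⊆ F ∧ ¬ V X x ⊆ G) :
    ∃ (n : ℕ) (f : Fin n → L),
      V X x = ⋃ i, V X (f i) ∧ ∀ i, V X (f i) ⊂ V X x := by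
  classical
  obtain ⟨F, G, hF, hG, hFG, hnF, hnG⟩ := hred
  obtain ⟨p, hpx, hpF⟩ := Set.not_subset.mp hnF
  obtain ⟨q, hqx, hqG⟩ := Set.not_subset.mp hnG
  obtain ⟨S, hSF, hSp⟩ := closed_avoid X hF hpF
  obtain ⟨T, hTG, hTq⟩ := closed_avoid X hG hqG
  set l : List L := (S.toList ++ T.toList).map (x ⊔ ·) with hl
  refine ⟨l.length, fun i => l.get i, ?_, ?_⟩
  · apply Set.Subset.antisymm
    · intro r hr
      have : r ∈ F ∪ G := hFG ▸ hr
      have hex : ∃ a, (a ∈ S ∨ a ∈ T) ∧ a ≤ (r : L) := by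
        rcases this with h | h
        · obtain ⟨a, ha, hra⟩ := Set.mem_iUnion₂.mp (hSF h)
          exact ⟨a, Or.inl ha, hra⟩
        · obtain ⟨a, ha, hra⟩ := Set.mem_iUnion₂.mp (hTG h)
          exact ⟨a, Or.inr ha, hra⟩
      obtain ⟨a, ha, hra⟩ := hex
      have hmem : x ⊔ a ∈ l := by
        rw [hl, List.mem_map]
        refine ⟨a, ?_, rfl⟩
        rw [List.mem_append, Finset.mem_toList, Finset.mem_toList]
        exact ha
      obtain ⟨i, hi⟩ := List.mem_iff_get.mp hmem
      refine Set.mem_iUnion.mpr ⟨i, ?_⟩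
      show r ∈ V X (l.get i)
      rw [hi]
      exact sup_le hr hra
    · refine Set.iUnion_subset fun i => ?_
      have hmem : l.get i ∈ l := List.get_mem l i
      have hmem' : l.get i ∈ List.map (fun a => x ⊔ a) (S.toList ++ T.toList) := hmem
      obtain ⟨a, _, ha⟩ := List.mem_map.mp hmem'
      show V X (l.get i) ⊆ V X x
      rw [← ha]
      exact V_antitone X le_sup_left
  · intro i
    have hmem : l.get i ∈ l := List.get_mem l i
    have hmem' : l.get i ∈ List.map (fun a => x ⊔ a) (S.toList ++ T.toList) := hmem
    obtain ⟨a, haST, ha⟩ := List.mem_map.mp hmem'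
    rw [List.mem_append, Finset.mem_toList, Finset.mem_toList] at haST
    show V X (l.get i) ⊂ V X x
    rw [← ha]
    refine ⟨V_antitone X le_sup_left, fun hsub => ?_⟩
    rcases haST with h | h
    · exact hSp a h (V_antitone X le_sup_right (hsub hpx))
    · exact hTq a h (V_antitone X le_sup_right (hsub hqx))

end ZariskiLattice
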